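/- Let a,b,e be real numbers and define X(x,y,z) = (ax+by+xz, -bx+ay+yz, ez - x^2 - y^2 - z^2) and Δ(x,y,z) = (x(a+z), y(a+z), ez - x^2 - y^2 - z^2). Then for all (x,y,z) ∈ ℝ³, the vector identity (DΔ)(x,y,z) · X(x,y,z) - (DX)(x,y,z) · Δ(x,y,z) = 0 holds, where DΔ and DX denote the Jacobian matrices. -/

import Mathlib

open ContinuousLinearMap

theorem stmt0 (a b e : ℝ)
    (X Δ : ℝ × ℝ × ℝ → ℝ × ℝ × ℝ)
    (hX : X = fun p => (a*p.1 + b*p.2.1 + p.1*p.2.2,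
                        -b*p.1 + a*p.2.1 + p.2.1*p.2.2,
                        e*p.2.2 - p.1^2 - p.2.1^2 - p.2.2^2))
    (hΔ : Δ = fun p => (p.1*(a + p.2.2), p.2.1*(a + p.2.2),
                        e*p.2.2 - p.1^2 - p.2.1^2 - p.2.2^2)) :
    ∀ p : ℝ × ℝ × ℝ, fderiv ℝ Δ p (X p) - fderiv ℝ X p (Δ p) = 0 := by
  subst hX hΔ
  intro p
  have hx : HasFDerivAt (fun p : ℝ × ℝ × ℝ => p.1) (fst ℝ ℝ (ℝ × ℝ)) p :=
    hasFDerivAt_fst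
  have hy : HasFDerivAt (fun p : ℝ × ℝ × ℝ => p.2.1)
      ((fst ℝ ℝ ℝ).comp (snd ℝ ℝ (ℝ × ℝ))) p := hasFDerivAt_snd.fst
  have hz : HasFDerivAt (fun p : ℝ × ℝ × ℝ => p.2.2)
      ((snd ℝ ℝ ℝ).comp (snd ℝ ℝ (ℝ × ℝ))) p := hasFDerivAt_snd.snd
  have hza : HasFDerivAt (fun p : ℝ × ℝ × ℝ => a + p.2.2)
      ((snd ℝ ℝ ℝ).comp (snd ℝ ℝ (ℝ × ℝ))) p := by
    exact ((hasFDerivAt_const a p).add hz).congr_fderiv (by simp)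
  have hX1 := ((hx.const_mul a).add (hy.const_mul b)).add (hx.mul hz)
  have hX2 := ((hx.const_mul (-b)).add (hy.const_mul a)).add (hy.mul hz)
  have hX3 := (((hz.const_mul e).sub (hx.mul hx)).sub (hy.mul hy)).sub (hz.mul hz)
  replace hX3 : HasFDerivAt (fun q : ℝ × ℝ × ℝ => e * q.2.2 - q.1 ^ 2 - q.2.1 ^ 2 - q.2.2 ^ 2) _ p :=
    hX3.congr_of_eventuallyEq (Filter.Eventually.of_forall fun q => by
      simp only [Pi.sub_apply, Pi.mul_apply]; ring)
  have hD1 := hx.mul hza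
  have hD2 := hy.mul hza
  have hXD : HasFDerivAt (fun q : ℝ × ℝ × ℝ => (a*q.1 + b*q.2.1 + q.1*q.2.2,
      -b*q.1 + a*q.2.1 + q.2.1*q.2.2, e*q.2.2 - q.1^2 - q.2.1^2 - q.2.2^2)) _ p := hX1.prodMk (hX2.prodMk hX3)
  have hDD : HasFDerivAt (fun q : ℝ × ℝ × ℝ => (q.1*(a + q.2.2), q.2.1*(a + q.2.2),
      e*q.2.2 - q.1^2 - q.2.1^2 - q.2.2^2)) _ p := hD1.prodMk (hD2.prodMk hX3)
  rw [hXD.fderiv, hDD.fderiv]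
  obtain ⟨x, y, z⟩ := p
  simp [Prod.ext_iff]
  constructor
  · ring
  constructor
  · ring
  · ring
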